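/- Let R be a commutative Noetherian ring and let I denote the nilradical of R. If the quotient ring R/I is finite (as a set), then R itself is finite. -/

import Mathlib

/-- If `f : A →+ B` has finite codomain and its kernel is covered by a finite type,
then `A` is finite. -/
private theorem finite_of_hom_aux {A B C : Type*} [AddCommGroup A] [AddCommGroup B]
    [Finite B] [Finite C] (f : A →+ B) (g : C → A)
    (hg : ∀ a : A, f a = 0 → ∃ c, g c = a) : Finite A := by
  have hne : Nonempty A := ⟨0⟩
  refine Finite.of_surjective (fun p : B × C => Function.invFun f p.1 + g p.2) ?_
  intro a
  have h0 : f (a - Function.invFun f (f a)) = 0 := by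
    have : f (Function.invFun f (f a)) = f a := Function.invFun_eq ⟨a, rfl⟩
    simp [this]
  obtain ⟨c, hc⟩ := hg _ h0
  exact ⟨(f a, c), by simp [hc]⟩

/-- If `R` is a commutative Noetherian ring whose quotient by its nilradical is finite,
then `R` is finite. -/
theorem stmt_8 (R : Type*) [CommRing R] [IsNoetherianRing R]
    (h : Finite (R ⧸ nilradical R)) : Finite R := by
  obtain ⟨n, hn⟩ := IsNoetherianRing.isNilpotent_nilradical R
  set I := nilradical R with hI
  have key : ∀ k, Finite (R ⧸ (I ^ (k + 1) : Ideal R)) := by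
    intro k
    induction k with
    | zero => simpa using h
    | succ k ih =>
      set J : Ideal R := I ^ (k + 1) with hJ
      have hJfin : Module.Finite R J := Module.Finite.iff_fg.mpr (IsNoetherian.noetherian J)
      set Q := (↥J ⧸ (I • ⊤ : Submodule R J)) with hQ
      have hQfinR : Module.Finite R Q := Module.Finite.quotient R _
      have hQfin : Module.Finite (R ⧸ I) Q :=
        Module.Finite.of_restrictScalars_finite R (R ⧸ I) Q
      have hQfinite : Finite Q := Module.finite_of_finite (R ⧸ I)
      -- the quotient map between successive power quotients
      have hle : (I ^ (k + 1 + 1) : Ideal R) ≤ I ^ (k + 1) :=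
        Ideal.pow_le_pow_right (Nat.le_succ _)
      let f : (R ⧸ (I ^ (k + 1 + 1) : Ideal R)) →+ (R ⧸ (I ^ (k + 1) : Ideal R)) :=
        (Ideal.Quotient.factor hle).toAddMonoidHom
      -- the map from Q into the bigger quotient
      let ℓ : ↥J →ₗ[R] (R ⧸ (I ^ (k + 1 + 1) : Ideal R)) :=
        (Submodule.mkQ _).comp J.subtype
      have hker : (I • ⊤ : Submodule R J) ≤ LinearMap.ker ℓ := by
        intro x hx
        have hmap : ((I • ⊤ : Submodule R J).map J.subtype : Submodule R R) = I • J := by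
          rw [Submodule.map_smul'', Submodule.map_top, Submodule.range_subtype]
        have hval : (x : R) ∈ I • J := by
          rw [← hmap]; exact ⟨x, hx, rfl⟩
        have hval2 : (x : R) ∈ (I ^ (k + 1 + 1) : Ideal R) := by
          have : I • J = I ^ (k + 1 + 1) := by
            rw [hJ, Ideal.smul_eq_mul, ← pow_succ']
          rwa [this] at hval
        simp only [LinearMap.mem_ker, ℓ, LinearMap.comp_apply, Submodule.subtype_apply,
          Submodule.mkQ_apply]
        exact (Submodule.Quotient.mk_eq_zero _).mpr hval2
      let g : Q →ₗ[R] (R ⧸ (I ^ (k + 1 + 1) : Ideal R)) := Submodule.liftQ _ ℓ hker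
      refine finite_of_hom_aux f g ?_
      intro a ha
      obtain ⟨r, rfl⟩ := Ideal.Quotient.mk_surjective a
      have hr : r ∈ J := by
        rw [hJ]
        have : Ideal.Quotient.mk (I ^ (k + 1)) r = 0 := ha
        exact (Ideal.Quotient.eq_zero_iff_mem).mp this
      exact ⟨Submodule.Quotient.mk ⟨r, hr⟩, rfl⟩
  rcases n with _ | m
  · have h1 : (1 : R) = 0 := by
      have : (1 : R) ∈ (I ^ 0 : Ideal R) := by simp
      rw [hn] at this
      simpa using this
    have : Subsingleton R := subsingleton_of_zero_eq_one h1.symm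
    exact Finite.of_subsingleton
  · have hfin := key m
    refine Finite.of_injective (Ideal.Quotient.mk (I ^ (m + 1))) ?_
    intro x y hxy
    have := Ideal.Quotient.eq.mp hxy
    rw [hn] at this
    simpa [sub_eq_zero] using this
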